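/- For every α : Finset Q, every γ ∈ Z(G_α) and every β ∈ S_X: g(γ ∩ (α Δ β)) ≡ g(γ ∩ α) (mod 4). (Invariance of the function g modulo 4 under stabilizer deformations of the error, from the proof of Lemma 1.) -/
import Mathlib


open Finset
open scoped symmDiff Matrix

namespace CC

variable {Q : Type*} [Fintype Q] [DecidableEq Q]

/-- A subgroup of the abelian group `(Finset Q, ∆)`. -/
def IsSubgroup (S : Set (Finset Q)) : Prop :=
  ∅ ∈ S ∧ ∀ a ∈ S, ∀ b ∈ S, a ∆ b ∈ S

/-- The subgroup of `(Finset Q, ∆)` generated by a set. -/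
def closure (T : Set (Finset Q)) : Set (Finset Q) :=
  ⋂₀ {S : Set (Finset Q) | IsSubgroup S ∧ T ⊆ S}

/-- A CSS stabilizer code on the qubits `Q`. -/
structure CSS (Q : Type*) [Fintype Q] [DecidableEq Q] where
  SX : Set (Finset Q)
  SZ : Set (Finset Q)
  hSX : IsSubgroup SX
  hSZ : IsSubgroup SZ
  comm : ∀ a ∈ SZ, ∀ b ∈ SX, 2 ∣ (a ∩ b).card

def ZX (C : CSS Q) : Set (Finset Q) := {γ | ∀ f ∈ C.SZ, 2 ∣ (γ ∩ f).card}

def ZZ (C : CSS Q) : Set (Finset Q) := {z | ∀ c ∈ C.SX, 2 ∣ (z ∩ c).card}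

/-- Duality assumption. -/
def Dual (C : CSS Q) : Prop :=
  C.SZ = {z | ∀ γ ∈ ZX C, 2 ∣ (z ∩ γ).card} ∧
  C.SX = {c | ∀ z ∈ ZZ C, 2 ∣ (c ∩ z).card}

def LogicalX (C : CSS Q) (l : Finset Q) : Prop := l ∈ ZX C ∧ l ∉ C.SX

def LogicalZ (C : CSS Q) (l : Finset Q) : Prop := l ∈ ZZ C ∧ l ∉ C.SZ

/-- Single-logical-qubit assumption. -/
def SingleQubit (C : CSS Q) : Prop :=
  (ZX C ≠ C.SX ∧ ∀ l l', LogicalX C l → LogicalX C l' → l ∆ l' ∈ C.SX) ∧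
  (ZZ C ≠ C.SZ ∧ ∀ l l', LogicalZ C l → LogicalZ C l' → l ∆ l' ∈ C.SZ)

/-- Intersection axiom. -/
def Inter (C : CSS Q) : Prop :=
  ZZ C = {x | ∃ α ∈ ZX C, ∃ β ∈ ZX C, x = α ∩ β}

def G (C : CSS Q) (α : Finset Q) : Set (Finset Q) :=
  closure (C.SZ ∪ {x | ∃ β ∈ ZX C, x = α ∩ β})

def H (C : CSS Q) (α : Finset Q) : Set (Finset Q) :=
  closure (C.SZ ∪ {x | ∃ β ∈ C.SX, x = α ∩ β})

def Zof (K : Set (Finset Q)) : Set (Finset Q) := {γ | ∀ h ∈ K, 2 ∣ (γ ∩ h).card}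

def Tolerable (C : CSS Q) (α : Finset Q) : Prop := ∀ z ∈ G C α, ¬ LogicalZ C z

def g (b : Q → ℤ) (s : Finset Q) : ℤ := ∑ q ∈ s, b q

/-- T-invariance assumption. -/
def TInv (C : CSS Q) (b : Q → ℤ) : Prop :=
  (∀ β ∈ C.SX, (8 : ℤ) ∣ g b β) ∧
  (∀ β ∈ C.SX, ∀ γ ∈ ZX C, (8 : ℤ) ∣ (g b β - 2 * g b (γ ∩ β)))

def E (C : CSS Q) (b : Q → ℤ) (α : Finset Q) : Set (Finset Q) :=
  {z | ∀ γ ∈ Zof (G C α), g b (γ ∩ α) ≡ 2 * ((z ∩ γ).card : ℤ) [ZMOD 4]}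

/- Quantum setting -/

abbrev M (Q : Type*) [Fintype Q] [DecidableEq Q] :=
  Matrix (Q → ZMod 2) (Q → ZMod 2) ℂ

def supp (v : Q → ZMod 2) : Finset Q := Finset.univ.filter (fun q => v q = 1)

def ind (α : Finset Q) : Q → ZMod 2 := fun q => if q ∈ α then 1 else 0

def XM (α : Finset Q) : M Q :=
  Matrix.of fun u v => if u = v + ind α then (1 : ℂ) else 0

noncomputable def ZM (α : Finset Q) : M Q :=
  Matrix.diagonal fun v => (-1 : ℂ) ^ (supp v ∩ α).card

noncomputable def AM (b : Q → ℤ) (α : Finset Q) : M Q :=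
  Matrix.diagonal fun v => Complex.I ^ (g b (α ∩ supp v))

noncomputable def UM (b : Q → ℤ) : M Q :=
  Matrix.diagonal fun v => Complex.exp (Real.pi * Complex.I / 4) ^ (g b (supp v))

def Encoded (C : CSS Q) (ρ : M Q) : Prop :=
  ρ.trace = 1 ∧
  (∀ c ∈ C.SX, XM c * ρ = ρ ∧ ρ * XM c = ρ) ∧
  (∀ f ∈ C.SZ, ZM f * ρ = ρ ∧ ρ * ZM f = ρ)

instance : Std.Commutative (α := Finset Q) (· ∆ ·) := ⟨symmDiff_comm⟩
instance : Std.Associative (α := Finset Q) (· ∆ ·) := ⟨symmDiff_assoc⟩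

/-- Iterated symmetric difference over a finite index set. -/
def bigΔ {ι : Type*} (s : Finset ι) (f : ι → Finset Q) : Finset Q :=
  s.fold (· ∆ ·) ∅ f

lemma subset_closure (T : Set (Finset Q)) : T ⊆ closure T := by
  intro x hx
  intro S hS
  exact hS.2 hx

lemma g_symmDiff (b : Q → ℤ) (s t : Finset Q) :
    g b (s ∆ t) = g b s + g b t - 2 * g b (s ∩ t) := by
  have h1 : s ∆ t = (s ∪ t) \ (s ∩ t) := by
    rw [symmDiff_eq_sup_sdiff_inf]; rfl
  have h2 := Finset.sum_sdiff (f := b) (Finset.inter_subset_union (s := s) (t := t))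
  have h3 := Finset.sum_sdiff (f := b) (Finset.inter_subset_right (s₁ := s) (s₂ := t))
  have h4 : ∑ x ∈ s ∪ t, b x = ∑ x ∈ s, b x + ∑ x ∈ t \ s, b x := by
    rw [← Finset.sum_union Finset.disjoint_sdiff, Finset.union_sdiff_self_eq_union]
  have h5 : t \ (s ∩ t) = t \ s := by ext x; simp
  rw [h5] at h3
  simp only [g, h1]
  linarith

lemma even_g_of_even_card (b : Q → ℤ) (hb : ∀ q, Odd (b q)) (s : Finset Q)
    (h : 2 ∣ s.card) : (2 : ℤ) ∣ g b s := by
  have h1 : g b s - (s.card : ℤ) = ∑ q ∈ s, (b q - 1) := by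
    simp [g, Finset.sum_sub_distrib]
  have h2 : (2 : ℤ) ∣ ∑ q ∈ s, (b q - 1) := by
    refine Finset.dvd_sum fun q _ => ?_
    obtain ⟨k, hk⟩ := hb q
    exact ⟨k, by omega⟩
  have h3 : (2 : ℤ) ∣ (s.card : ℤ) := by exact_mod_cast Int.natCast_dvd_natCast.mpr h
  omega

/-- Invariance of the function `g` modulo 4 under stabilizer deformations of the error
(from the proof of Lemma 1). -/
theorem g_invariance_mod_four
    (C : CSS Q) (b : Q → ℤ) (hb : ∀ q, Odd (b q)) (htinv : TInv C b)
    (α : Finset Q) (γ : Finset Q) (hγ : γ ∈ Zof (G C α))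
    (β : Finset Q) (hβ : β ∈ C.SX) :
    g b (γ ∩ (α ∆ β)) ≡ g b (γ ∩ α) [ZMOD 4] := by
  -- β ∈ ZX C
  have hβZX : β ∈ ZX C := by
    intro f hf
    have := C.comm f hf β hβ
    rwa [Finset.inter_comm]
  -- γ ∈ ZX C
  have hSZsub : C.SZ ⊆ G C α := fun f hf =>
    subset_closure _ (Set.mem_union_left _ hf)
  have hγZX : γ ∈ ZX C := fun f hf => hγ f (hSZsub hf)
  -- α ∩ β ∈ G C α
  have hαβG : α ∩ β ∈ G C α :=
    subset_closure _ (Set.mem_union_right _ ⟨β, hβZX, rfl⟩)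
  -- divisibility facts
  have h1 : (8 : ℤ) ∣ g b β := htinv.1 β hβ
  have h2 : (8 : ℤ) ∣ g b β - 2 * g b (γ ∩ β) := htinv.2 β hβ γ hγZX
  have h4 : (4 : ℤ) ∣ g b (γ ∩ β) := by omega
  have h5 : (2 : ℤ) ∣ g b (γ ∩ (α ∩ β)) :=
    even_g_of_even_card b hb _ (hγ _ hαβG)
  -- rewrite the goal
  have hdist : γ ∩ (α ∆ β) = (γ ∩ α) ∆ (γ ∩ β) := by
    have := inf_symmDiff_distrib_left (a := γ) (b := α) (c := β)
    simpa using this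
  have hint : (γ ∩ α) ∩ (γ ∩ β) = γ ∩ (α ∩ β) := by
    ext x; simp; tauto
  rw [hdist, g_symmDiff, hint, Int.ModEq]
  omega

end CC
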